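/- arXiv:1704.05991 — 2 statements merged into one kernel-verified Lean document; each statement's English description precedes it below -/
import Mathlib

section
/- For the symmetric matrix A_n indexed by the vertex set V_n = {(i,u) ∈ ℤ² : 0 ≤ i < n, |u| ≤ i, i - u even}, with entries A_n[(i,u),(j,v)] = 1/|i-j| if i ≠ j and |u - v| ≤ |i - j|, and 0 otherwise, there exist constants c, C > 0 such that c n² log n ≤ ‖A_n‖_F² ≤ C n² log n for all n ≥ 2, where ‖·‖_F is the Frobenius norm. -/
set_option maxHeartbeats 1000000

/-- The vertex set `V_n = {(i,u) ∈ ℤ² : 0 ≤ i < n, |u| ≤ i, i - u even}`. -/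
noncomputable def triVertices (n : ℕ) : Finset (ℤ × ℤ) :=
  (Finset.Icc (-(n : ℤ)) n ×ˢ Finset.Icc (-(n : ℤ)) n).filter
    (fun p => 0 ≤ p.1 ∧ p.1 < n ∧ |p.2| ≤ p.1 ∧ (p.1 - p.2) % 2 = 0)

/-- The matrix entry: `A[(i,u),(j,v)] = 1/|i-j|` if `i ≠ j` and `|u-v| ≤ |i-j|`,
and `0` otherwise. -/
noncomputable def triEntry (p q : ℤ × ℤ) : ℝ :=
  if p.1 ≠ q.1 ∧ |p.2 - q.2| ≤ |p.1 - q.1| then |(p.1 : ℝ) - (q.1 : ℝ)|⁻¹ else 0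

lemma subset_box (n : ℕ) :
    triVertices n ⊆ Finset.Icc (0:ℤ) ((n:ℤ)-1) ×ˢ Finset.Icc (-(n:ℤ)) n := by
  intro p hp
  simp only [triVertices, Finset.mem_filter, Finset.mem_product, Finset.mem_Icc, abs_le] at hp ⊢
  omega

lemma abs_cast_sub (i j : ℤ) : |(i : ℝ) - (j : ℝ)| = ((|i - j| : ℤ) : ℝ) := by
  push_cast
  rfl

lemma inner_v_bound (n : ℕ) (i j u : ℤ) :
    ∑ v ∈ Finset.Icc (-(n:ℤ)) n, (triEntry (i,u) (j,v))^2 ≤ 3 * |(i:ℝ) - (j:ℝ)|⁻¹ := by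
  rcases eq_or_ne i j with rfl | hij
  · have : ∀ v ∈ Finset.Icc (-(n:ℤ)) n, (triEntry (i,u) (i,v))^2 = 0 := by
      intro v _
      simp [triEntry]
    rw [Finset.sum_congr rfl this]
    simp
  · set d : ℤ := |i - j| with hd
    have hd1 : 1 ≤ d := by
      have h := sub_ne_zero.mpr hij
      have := abs_pos.mpr h
      omega
    have habs : |(i:ℝ) - (j:ℝ)| = (d : ℝ) := by rw [abs_cast_sub]
    have hterm : ∀ v, (triEntry (i,u) (j,v))^2
        = if |u - v| ≤ d then ((d:ℝ)^2)⁻¹ else 0 := by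
      intro v
      simp only [triEntry]
      by_cases h : |u - v| ≤ d
      · rw [if_pos ⟨hij, h⟩, if_pos h, habs, ← inv_pow, sq]
      · rw [if_neg (by tauto), if_neg h]
        simp
    calc ∑ v ∈ Finset.Icc (-(n:ℤ)) n, (triEntry (i,u) (j,v))^2
        = ∑ v ∈ (Finset.Icc (-(n:ℤ)) n).filter (fun v => |u - v| ≤ d), ((d:ℝ)^2)⁻¹ := by
          rw [Finset.sum_filter]
          exact Finset.sum_congr rfl (fun v _ => hterm v)
      _ = ((Finset.Icc (-(n:ℤ)) n).filter (fun v => |u - v| ≤ d)).card * ((d:ℝ)^2)⁻¹ := by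
          rw [Finset.sum_const, nsmul_eq_mul]
      _ ≤ (3 * d : ℤ) * ((d:ℝ)^2)⁻¹ := by
          have hsub : (Finset.Icc (-(n:ℤ)) n).filter (fun v => |u - v| ≤ d) ⊆
              Finset.Icc (u - d) (u + d) := by
            intro v hv
            simp only [Finset.mem_filter, Finset.mem_Icc, abs_le] at hv ⊢
            omega
          have hcard := Finset.card_le_card hsub
          rw [Int.card_Icc] at hcard
          have hcard2 : ((Finset.Icc (-(n:ℤ)) n).filter (fun v => |u - v| ≤ d)).card ≤ 3 * d := by
            have : ((u + d + 1 - (u - d)).toNat : ℤ) = 2 * d + 1 := by omega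
            omega
          have h3 : (0:ℝ) ≤ ((d:ℝ)^2)⁻¹ := by positivity
          have : (((Finset.Icc (-(n:ℤ)) n).filter (fun v => |u - v| ≤ d)).card : ℝ) ≤ ((3 * d : ℤ) : ℝ) := by
            exact_mod_cast hcard2
          exact mul_le_mul_of_nonneg_right this h3
      _ = 3 * |(i:ℝ) - (j:ℝ)|⁻¹ := by
          rw [habs]
          push_cast
          have : (d:ℝ) ≠ 0 := by positivity
          field_simp

/-- Real-valued harmonic sum identity. -/
lemma harmonic_real (m : ℕ) : ((harmonic m : ℚ) : ℝ) = ∑ i ∈ Finset.Icc 1 m, (i : ℝ)⁻¹ := by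
  rw [harmonic_eq_sum_Icc]
  push_cast
  rfl

lemma sum_Icc_int_eq_range (n : ℕ) (f : ℤ → ℝ) :
    ∑ j ∈ Finset.Icc (0:ℤ) ((n:ℤ)-1), f j = ∑ j ∈ Finset.range n, f (j:ℤ) := by
  refine Finset.sum_nbij' (fun a => a.toNat) (fun b => (b : ℤ)) ?_ ?_ ?_ ?_ ?_
  · intro a ha; simp only [Finset.mem_Icc] at ha; simp only [Finset.mem_range]
    omega
  · intro b hb; simp only [Finset.mem_range] at hb; simp only [Finset.mem_Icc]
    omega
  · intro a ha; simp only [Finset.mem_Icc] at ha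
    show ((a.toNat : ℕ) : ℤ) = a
    omega
  · intro b _
    show ((b:ℤ)).toNat = b
    omega
  · intro a ha; simp only [Finset.mem_Icc] at ha
    simp only [Int.toNat_of_nonneg ha.1]

lemma sum_range_inv_le (m : ℕ) : ∑ t ∈ Finset.range m, (t : ℝ)⁻¹ ≤ ((harmonic m : ℚ) : ℝ) := by
  cases m with
  | zero => simp
  | succ m' =>
    rw [Finset.sum_range_succ']
    simp only [Nat.cast_zero, inv_zero, add_zero]
    have h1 : ∑ t ∈ Finset.range m', ((t+1 : ℕ) : ℝ)⁻¹ = ((harmonic m' : ℚ) : ℝ) := by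
      rw [harmonic]; push_cast; rfl
    push_cast at h1 ⊢
    rw [h1]
    have : (harmonic m' : ℚ) ≤ harmonic (m'+1) := by
      rw [harmonic_succ]
      have : (0:ℚ) ≤ ((m'+1 : ℕ):ℚ)⁻¹ := by positivity
      linarith
    exact_mod_cast this

lemma harm_bound_nat (n i : ℕ) (hi : i < n) :
    ∑ j ∈ Finset.range n, |(i : ℝ) - (j : ℝ)|⁻¹ ≤ 2 * (1 + Real.log n) := by
  have hsplit : ∑ j ∈ Finset.range n, |(i : ℝ) - (j : ℝ)|⁻¹
      = (∑ j ∈ Finset.Ico 0 i, |(i : ℝ) - (j : ℝ)|⁻¹) +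
        ∑ j ∈ Finset.Ico i n, |(i : ℝ) - (j : ℝ)|⁻¹ := by
    rw [Finset.range_eq_Ico, ← Finset.sum_Ico_consecutive _ (Nat.zero_le i) (le_of_lt hi)]
  have hA : ∑ j ∈ Finset.Ico 0 i, |(i : ℝ) - (j : ℝ)|⁻¹ = ((harmonic i : ℚ) : ℝ) := by
    rw [← Finset.range_eq_Ico]
    rw [← Finset.sum_range_reflect (fun j => |(i : ℝ) - (j : ℝ)|⁻¹) i]
    rw [harmonic]; push_cast
    refine Finset.sum_congr rfl ?_
    intro j hj; simp only [Finset.mem_range] at hj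
    have h1 : ((i - 1 - j : ℕ) : ℝ) = (i : ℝ) - 1 - j := by
      have : (i - 1 - j : ℕ) = i - (1 + j) := by omega
      rw [this, Nat.cast_sub (by omega)]; push_cast; ring
    rw [h1, show (i:ℝ) - ((i:ℝ) - 1 - j) = j + 1 by ring, abs_of_pos (by positivity)]
  have hB : ∑ j ∈ Finset.Ico i n, |(i : ℝ) - (j : ℝ)|⁻¹ ≤ ((harmonic n : ℚ) : ℝ) := by
    rw [Finset.sum_Ico_eq_sum_range]
    have : ∀ t ∈ Finset.range (n - i), |(i : ℝ) - ((i + t : ℕ) : ℝ)|⁻¹ = (t : ℝ)⁻¹ := by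
      intro t _; push_cast
      rw [show (i:ℝ) - ((i:ℝ) + t) = -t by ring, abs_neg, abs_of_nonneg (by positivity)]
    rw [Finset.sum_congr rfl this]
    refine le_trans (sum_range_inv_le _) ?_
    have : harmonic (n - i) ≤ harmonic n := by
      have h := Finset.sum_le_sum_of_subset_of_nonneg
        (Finset.range_subset_range.2 (Nat.sub_le n i))
        (fun k _ _ => by positivity : ∀ k ∈ Finset.range n, k ∉ Finset.range (n-i) → 0 ≤ ((k+1:ℕ):ℚ)⁻¹)
      exact h
    exact_mod_cast this
  have hiharm : ((harmonic i : ℚ) : ℝ) ≤ ((harmonic n : ℚ) : ℝ) := by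
    have : harmonic i ≤ harmonic n := by
      have h := Finset.sum_le_sum_of_subset_of_nonneg
        (Finset.range_subset_range.2 (le_of_lt hi))
        (fun k _ _ => by positivity : ∀ k ∈ Finset.range n, k ∉ Finset.range i → 0 ≤ ((k+1:ℕ):ℚ)⁻¹)
      exact h
    exact_mod_cast this
  have hlog := harmonic_le_one_add_log n
  rw [hsplit]
  nlinarith [hA, hB, hiharm, hlog]

lemma harm_bound_int (n : ℕ) (i : ℤ) (h0 : 0 ≤ i) (h1 : i < n) :
    ∑ j ∈ Finset.Icc (0:ℤ) ((n:ℤ)-1), |(i:ℝ) - (j:ℝ)|⁻¹ ≤ 2 * (1 + Real.log n) := by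
  rw [sum_Icc_int_eq_range n (fun j => |(i:ℝ) - (j:ℝ)|⁻¹)]
  have hi : i = ((i.toNat : ℕ) : ℤ) := by omega
  have : ∀ j ∈ Finset.range n, |(i:ℝ) - ((j:ℤ):ℝ)|⁻¹ = |((i.toNat : ℕ):ℝ) - (j:ℝ)|⁻¹ := by
    intro j _
    have hcast : ((i.toNat:ℕ):ℝ) = (i:ℝ) := by exact_mod_cast Int.toNat_of_nonneg h0
    rw [hcast]
    push_cast
    ring_nf
  rw [Finset.sum_congr rfl this]
  exact harm_bound_nat n i.toNat (by omega)

lemma upper_bound (n : ℕ) (hn : 2 ≤ n) :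
    (∑ p ∈ triVertices n, ∑ q ∈ triVertices n, (triEntry p q) ^ 2) ≤
      54 * (n : ℝ) ^ 2 * Real.log n := by
  set B := Finset.Icc (0:ℤ) ((n:ℤ)-1) ×ˢ Finset.Icc (-(n:ℤ)) n with hB
  have step1 : (∑ p ∈ triVertices n, ∑ q ∈ triVertices n, (triEntry p q) ^ 2) ≤
      ∑ p ∈ B, ∑ q ∈ B, (triEntry p q) ^ 2 := by
    have inner : ∀ p, (∑ q ∈ triVertices n, (triEntry p q) ^ 2) ≤
        ∑ q ∈ B, (triEntry p q) ^ 2 :=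
      fun p => Finset.sum_le_sum_of_subset_of_nonneg (subset_box n)
        (fun q _ _ => sq_nonneg _)
    calc (∑ p ∈ triVertices n, ∑ q ∈ triVertices n, (triEntry p q) ^ 2)
        ≤ ∑ p ∈ triVertices n, ∑ q ∈ B, (triEntry p q) ^ 2 :=
          Finset.sum_le_sum (fun p _ => inner p)
      _ ≤ ∑ p ∈ B, ∑ q ∈ B, (triEntry p q) ^ 2 :=
          Finset.sum_le_sum_of_subset_of_nonneg (subset_box n)
            (fun p _ _ => Finset.sum_nonneg (fun q _ => sq_nonneg _))
  have step2 : ∑ p ∈ B, ∑ q ∈ B, (triEntry p q) ^ 2 ≤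
      (n:ℝ) * ((2*(n:ℝ)+1) * (3 * (2 * (1 + Real.log n)))) := by
    rw [hB, Finset.sum_product]
    have hcardIcc : ((Finset.Icc (0:ℤ) ((n:ℤ)-1)).card : ℝ) = (n:ℝ) := by
      rw [Int.card_Icc]
      have : (((n:ℤ) - 1 + 1 - 0).toNat : ℤ) = n := by omega
      exact_mod_cast congrArg (Int.cast : ℤ → ℝ) this
    have hcardU : ((Finset.Icc (-(n:ℤ)) (n:ℤ)).card : ℝ) = 2*(n:ℝ)+1 := by
      rw [Int.card_Icc]
      have : (((n:ℤ) + 1 - (-(n:ℤ))).toNat : ℤ) = 2*n+1 := by omega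
      exact_mod_cast congrArg (Int.cast : ℤ → ℝ) this
    calc ∑ i ∈ Finset.Icc (0:ℤ) ((n:ℤ)-1), ∑ u ∈ Finset.Icc (-(n:ℤ)) n,
            ∑ q ∈ B, (triEntry (i,u) q) ^ 2
        ≤ ∑ i ∈ Finset.Icc (0:ℤ) ((n:ℤ)-1), ∑ u ∈ Finset.Icc (-(n:ℤ)) n,
            (3 * (2 * (1 + Real.log n))) := by
          refine Finset.sum_le_sum (fun i hi => Finset.sum_le_sum (fun u _ => ?_))
          rw [hB, Finset.sum_product]
          calc ∑ j ∈ Finset.Icc (0:ℤ) ((n:ℤ)-1), ∑ v ∈ Finset.Icc (-(n:ℤ)) n,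
                  (triEntry (i,u) (j,v)) ^ 2
              ≤ ∑ j ∈ Finset.Icc (0:ℤ) ((n:ℤ)-1), 3 * |(i:ℝ) - (j:ℝ)|⁻¹ :=
                Finset.sum_le_sum (fun j _ => inner_v_bound n i j u)
            _ = 3 * ∑ j ∈ Finset.Icc (0:ℤ) ((n:ℤ)-1), |(i:ℝ) - (j:ℝ)|⁻¹ := by
                rw [Finset.mul_sum]
            _ ≤ 3 * (2 * (1 + Real.log n)) := by
                simp only [Finset.mem_Icc] at hi
                have := harm_bound_int n i hi.1 (by omega)
                nlinarith [this]
      _ = (n:ℝ) * ((2*(n:ℝ)+1) * (3 * (2 * (1 + Real.log n)))) := by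
          rw [Finset.sum_const, Finset.sum_const, nsmul_eq_mul, nsmul_eq_mul, hcardIcc, hcardU]
  have hlog2 : 1 ≤ 2 * Real.log n := by
    have h2 : Real.log 2 ≥ 1/2 := by
      rw [ge_iff_le, div_le_iff₀ (by norm_num), mul_comm, ← Real.log_rpow (by norm_num)]
      rw [Real.le_log_iff_exp_le (by positivity)]
      calc Real.exp 1 ≤ 2.7182818286 := (Real.exp_one_lt_d9).le
        _ ≤ (2:ℝ) ^ (2:ℝ) := by
            rw [show ((2:ℝ):ℝ) = ((2:ℕ):ℝ) by norm_num, Real.rpow_natCast]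
            norm_num
    have hmono : Real.log 2 ≤ Real.log n :=
      Real.log_le_log (by norm_num) (by exact_mod_cast hn)
    linarith
  have hlogpos : 0 ≤ Real.log n := by
    have : (1:ℝ) ≤ n := by exact_mod_cast (by omega : 1 ≤ n)
    exact Real.log_nonneg this
  have hn1 : (1:ℝ) ≤ (n:ℝ) := by exact_mod_cast (by omega : 1 ≤ n)
  refine step1.trans (step2.trans ?_)
  nlinarith [hlog2, hlogpos, hn1, sq_nonneg ((n:ℝ) - 1)]

lemma harmonic_real' (m : ℕ) : ((harmonic m : ℚ) : ℝ) = ∑ i ∈ Finset.Icc 1 m, (i : ℝ)⁻¹ := by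
  rw [harmonic_eq_sum_Icc]; push_cast; rfl

lemma one_le_S (n : ℕ) (hn : 2 ≤ n) :
    1 ≤ ∑ p ∈ triVertices n, ∑ q ∈ triVertices n, (triEntry p q) ^ 2 := by
  have h00 : ((0:ℤ),(0:ℤ)) ∈ triVertices n := by
    simp only [triVertices, Finset.mem_filter, Finset.mem_product, Finset.mem_Icc]
    refine ⟨⟨⟨by omega, by omega⟩, by omega, by omega⟩, le_refl _, by omega, by decide, by decide⟩
  have h11 : ((1:ℤ),(1:ℤ)) ∈ triVertices n := by
    simp only [triVertices, Finset.mem_filter, Finset.mem_product, Finset.mem_Icc]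
    refine ⟨⟨⟨by omega, by omega⟩, by omega, by omega⟩, by omega, by omega, by decide, by decide⟩
  have hval : (triEntry ((0:ℤ),(0:ℤ)) ((1:ℤ),(1:ℤ)))^2 = 1 := by
    simp only [triEntry]
    norm_num
  calc (1:ℝ) = (triEntry ((0:ℤ),(0:ℤ)) ((1:ℤ),(1:ℤ)))^2 := hval.symm
    _ ≤ ∑ q ∈ triVertices n, (triEntry ((0:ℤ),(0:ℤ)) q)^2 :=
        Finset.single_le_sum (f := fun q => (triEntry ((0:ℤ),(0:ℤ)) q)^2)
          (fun q _ => sq_nonneg _) h11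
    _ ≤ ∑ p ∈ triVertices n, ∑ q ∈ triVertices n, (triEntry p q) ^ 2 :=
        Finset.single_le_sum
          (f := fun p => ∑ q ∈ triVertices n, (triEntry p q)^2)
          (fun p _ => Finset.sum_nonneg (fun q _ => sq_nonneg _)) h00

lemma lower_big (n : ℕ) (hn : 256 ≤ n) :
    (1/2048) * (n:ℝ)^2 * Real.log n ≤
      ∑ p ∈ triVertices n, ∑ q ∈ triVertices n, (triEntry p q) ^ 2 := by
  set N : ℕ := n / 8 with hNdef
  have hN8 : 8 * N ≤ n := by omega
  have hN8' : n < 8 * N + 8 := by omega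
  have hN32 : 32 ≤ N := by omega
  set T : ℝ := ∑ e ∈ Finset.Icc 1 N, ((e:ℝ)+1) * ((4:ℝ) * (e:ℝ)^2)⁻¹ with hT
  set Pidx : Finset (ℕ × ℕ) := (Finset.Ico (2*N) (3*N)) ×ˢ (Finset.range (N+1)) with hPidx
  set φ : ℕ × ℕ → ℤ × ℤ := fun as => ((2*(as.1:ℤ), -(2*(as.2:ℤ))) : ℤ × ℤ) with hφ
  have hPsub : Pidx.image φ ⊆ triVertices n := by
    intro p hp
    simp only [hPidx, hφ, Finset.mem_image, Finset.mem_product, Finset.mem_Ico,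
      Finset.mem_range] at hp
    obtain ⟨⟨a, s⟩, ⟨⟨ha1, ha2⟩, hs⟩, rfl⟩ := hp
    simp only [triVertices, Finset.mem_filter, Finset.mem_product, Finset.mem_Icc]
    refine ⟨⟨⟨by omega, by omega⟩, by omega, by omega⟩, by omega, by omega, ?_, ?_⟩
    · rw [abs_of_nonpos (by omega)]; omega
    · omega
  have hφinj : ∀ x ∈ Pidx, ∀ y ∈ Pidx, φ x = φ y → x = y := by
    intro x _ y _ hxy
    simp only [hφ, Prod.mk.injEq] at hxy
    obtain ⟨h1, h2⟩ := hxy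
    have e1 : x.1 = y.1 := by omega
    have e2 : x.2 = y.2 := by omega
    exact Prod.ext e1 e2
  -- inner sum lower bound for fixed x = (a,s) ∈ Pidx
  have hinner : ∀ x ∈ Pidx, T ≤ ∑ q ∈ triVertices n, (triEntry (φ x) q)^2 := by
    rintro ⟨a, s⟩ hx
    simp only [hPidx, Finset.mem_product, Finset.mem_Ico, Finset.mem_range] at hx
    obtain ⟨⟨ha1, ha2⟩, hs⟩ := hx
    set Qidx : Finset (ℕ × ℕ) :=
      ((Finset.Icc 1 N) ×ˢ (Finset.range (N+1))).filter (fun ek => ek.2 ≤ ek.1) with hQidx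
    set ψ : ℕ × ℕ → ℤ × ℤ :=
      fun ek => ((2*(a:ℤ) - 2*(ek.1:ℤ), 2*(ek.2:ℤ) - 2*(s:ℤ)) : ℤ × ℤ) with hψ
    have hQsub : Qidx.image ψ ⊆ triVertices n := by
      intro q hq
      simp only [hQidx, hψ, Finset.mem_image, Finset.mem_filter, Finset.mem_product,
        Finset.mem_Icc, Finset.mem_range] at hq
      obtain ⟨⟨e, k⟩, ⟨⟨⟨he1, he2⟩, hk⟩, hke⟩, rfl⟩ := hq
      simp only [triVertices, Finset.mem_filter, Finset.mem_product, Finset.mem_Icc]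
      have habs : |2*(k:ℤ) - 2*(s:ℤ)| ≤ 2*(N:ℤ) := by rw [abs_le]; constructor <;> omega
      rw [abs_le] at habs
      refine ⟨⟨⟨by omega, by omega⟩, by omega, by omega⟩, by omega, by omega, ?_, ?_⟩
      · rw [abs_le]; constructor <;> omega
      · omega
    have hψinj : ∀ x ∈ Qidx, ∀ y ∈ Qidx, ψ x = ψ y → x = y := by
      intro x _ y _ hxy
      simp only [hψ, Prod.mk.injEq] at hxy
      obtain ⟨h1, h2⟩ := hxy
      have e1 : x.1 = y.1 := by omega
      have e2 : x.2 = y.2 := by omega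
      exact Prod.ext e1 e2
    have hval : ∀ ek ∈ Qidx, (triEntry (φ (a,s)) (ψ ek))^2 = ((4:ℝ) * ((ek.1:ℝ))^2)⁻¹ := by
      intro ek hek
      simp only [hQidx, Finset.mem_filter, Finset.mem_product, Finset.mem_Icc,
        Finset.mem_range] at hek
      obtain ⟨⟨⟨he1, he2⟩, hk⟩, hke⟩ := hek
      have hc1 : |2*(a:ℤ) - (2*(a:ℤ) - 2*(ek.1:ℤ))| = 2*(ek.1:ℤ) := by
        rw [show 2*(a:ℤ) - (2*(a:ℤ) - 2*(ek.1:ℤ)) = 2*(ek.1:ℤ) by ring,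
          abs_of_nonneg (by positivity)]
      have hc2 : |(-(2*(s:ℤ))) - (2*(ek.2:ℤ) - 2*(s:ℤ))| = 2*(ek.2:ℤ) := by
        rw [show (-(2*(s:ℤ))) - (2*(ek.2:ℤ) - 2*(s:ℤ)) = -(2*(ek.2:ℤ)) by ring, abs_neg,
          abs_of_nonneg (by positivity)]
      simp only [triEntry, hφ, hψ]
      rw [if_pos ⟨by intro hcon; omega, by rw [hc1, hc2]; omega⟩]
      rw [inv_pow, sq_abs]
      push_cast
      rw [show ((2*(a:ℕ):ℝ) - (2*(a:ℝ) - 2*(ek.1:ℝ)))^2 = 4*(ek.1:ℝ)^2 by push_cast; ring]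
    have hchain : T ≤ ∑ q ∈ Qidx.image ψ, (triEntry (φ (a,s)) q)^2 := by
      rw [Finset.sum_image hψinj, Finset.sum_congr rfl hval, hQidx, Finset.sum_filter,
        Finset.sum_product]
      rw [hT]
      refine le_of_eq (Finset.sum_congr rfl ?_)
      intro e he
      simp only [Finset.mem_Icc] at he
      rw [← Finset.sum_filter]
      have hfil : (Finset.range (N+1)).filter (fun k => k ≤ e) = Finset.range (e+1) := by
        ext k
        simp only [Finset.mem_filter, Finset.mem_range]
        omega
      rw [hfil]
      dsimp only
      rw [Finset.sum_const, Finset.card_range, nsmul_eq_mul]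
      push_cast
      ring
    refine hchain.trans ?_
    exact Finset.sum_le_sum_of_subset_of_nonneg hQsub (fun q _ _ => sq_nonneg _)
  -- assemble
  have hcardP : (Pidx.card : ℝ) = (N:ℝ) * ((N:ℝ)+1) := by
    rw [hPidx, Finset.card_product, Finset.card_range, Nat.card_Ico,
      show 3*N - 2*N = N by omega]
    push_cast
    ring
  have houter : (N:ℝ) * ((N:ℝ)+1) * T ≤
      ∑ p ∈ triVertices n, ∑ q ∈ triVertices n, (triEntry p q)^2 := by
    calc (N:ℝ) * ((N:ℝ)+1) * T = Pidx.card • T := by rw [nsmul_eq_mul, hcardP]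
      _ = ∑ _x ∈ Pidx, T := by rw [Finset.sum_const]
      _ ≤ ∑ x ∈ Pidx, ∑ q ∈ triVertices n, (triEntry (φ x) q)^2 :=
          Finset.sum_le_sum hinner
      _ = ∑ p ∈ Pidx.image φ, ∑ q ∈ triVertices n, (triEntry p q)^2 :=
          (Finset.sum_image (f := fun p => ∑ q ∈ triVertices n, (triEntry p q)^2) hφinj).symm
      _ ≤ ∑ p ∈ triVertices n, ∑ q ∈ triVertices n, (triEntry p q)^2 :=
          Finset.sum_le_sum_of_subset_of_nonneg hPsub
            (fun p _ _ => Finset.sum_nonneg (fun q _ => sq_nonneg _))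
  -- T ≥ (1/4) log (N+1)
  have hTlog : (1/4) * Real.log ((N:ℝ)+1) ≤ T := by
    have h1 : ∀ e ∈ Finset.Icc 1 N, (1/4) * (e:ℝ)⁻¹ ≤ ((e:ℝ)+1) * ((4:ℝ) * (e:ℝ)^2)⁻¹ := by
      intro e he
      simp only [Finset.mem_Icc] at he
      have heR : (1:ℝ) ≤ (e:ℝ) := by exact_mod_cast he.1
      have hpos : (0:ℝ) < (e:ℝ) := by linarith
      rw [show (1/4) * (e:ℝ)⁻¹ = (e:ℝ) * ((4:ℝ) * (e:ℝ)^2)⁻¹ by field_simp]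
      have : (e:ℝ) ≤ (e:ℝ) + 1 := by linarith
      exact mul_le_mul_of_nonneg_right this (by positivity)
    have h2 : Real.log ((N:ℝ)+1) ≤ ∑ e ∈ Finset.Icc 1 N, (e:ℝ)⁻¹ := by
      have := log_add_one_le_harmonic N
      rw [harmonic_real'] at this
      calc Real.log ((N:ℝ)+1) = Real.log ((N+1 : ℕ) : ℝ) := by push_cast; ring_nf
        _ ≤ _ := this
    calc (1/4) * Real.log ((N:ℝ)+1) ≤ (1/4) * ∑ e ∈ Finset.Icc 1 N, (e:ℝ)⁻¹ := by linarith
      _ = ∑ e ∈ Finset.Icc 1 N, (1/4) * (e:ℝ)⁻¹ := by rw [Finset.mul_sum]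
      _ ≤ T := Finset.sum_le_sum h1
  -- numbers
  have hn16 : (n:ℝ) ≤ 16 * (N:ℝ) := by
    have : n ≤ 16 * N := by omega
    exact_mod_cast this
  have hNpos : (0:ℝ) < (N:ℝ) := by
    have : 0 < N := by omega
    exact_mod_cast this
  have hnpos : (0:ℝ) < (n:ℝ) := by
    have : 0 < n := by omega
    exact_mod_cast this
  have hlogn0 : 0 ≤ Real.log n := Real.log_nonneg (by exact_mod_cast (by omega : 1 ≤ n))
  have hlogN : (1/2) * Real.log n ≤ Real.log (N:ℝ) := by
    have hlog16 : Real.log ((n:ℝ)/16) ≤ Real.log (N:ℝ) :=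
      Real.log_le_log (by positivity) (by linarith)
    have hdiv : Real.log ((n:ℝ)/16) = Real.log n - Real.log 16 :=
      Real.log_div (ne_of_gt hnpos) (by norm_num)
    have h256 : Real.log 256 ≤ Real.log n :=
      Real.log_le_log (by norm_num) (by exact_mod_cast hn)
    have h162 : Real.log 256 = 2 * Real.log 16 := by
      rw [show (256:ℝ) = 16^2 by norm_num, Real.log_pow]
      push_cast
      ring
    linarith
  have hlogN1 : Real.log (N:ℝ) ≤ Real.log ((N:ℝ)+1) :=
    Real.log_le_log (by positivity) (by linarith)
  have s1 : (N:ℝ)^2 ≤ (N:ℝ)*((N:ℝ)+1) := by nlinarith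
  have s2 : (1/8) * Real.log n ≤ T := by linarith
  have s3 : ((n:ℝ)/16)^2 ≤ (N:ℝ)^2 := by nlinarith
  have t1 : (N:ℝ)^2 * ((1/8) * Real.log n) ≤ ((N:ℝ)*((N:ℝ)+1)) * T :=
    mul_le_mul s1 s2 (by positivity) (by positivity)
  have t2 : ((n:ℝ)/16)^2 * ((1/8) * Real.log n) ≤ (N:ℝ)^2 * ((1/8) * Real.log n) :=
    mul_le_mul_of_nonneg_right s3 (by positivity)
  have t3 : ((n:ℝ)/16)^2 * ((1/8) * Real.log n) = (1/2048) * (n:ℝ)^2 * Real.log n := by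
    ring
  linarith [houter]

/-- There exist `c, C > 0` such that for all `n ≥ 2`,
`c n² log n ≤ ‖A_n‖_F² ≤ C n² log n`, where
`‖A_n‖_F² = ∑_{p,q ∈ V_n} A_n[p,q]²`. -/
theorem frobenius_norm_sq_asymp :
    ∃ c C : ℝ, 0 < c ∧ 0 < C ∧ ∀ n : ℕ, 2 ≤ n →
      c * (n : ℝ) ^ 2 * Real.log n ≤
        (∑ p ∈ triVertices n, ∑ q ∈ triVertices n, (triEntry p q) ^ 2) ∧
      (∑ p ∈ triVertices n, ∑ q ∈ triVertices n, (triEntry p q) ^ 2) ≤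
        C * (n : ℝ) ^ 2 * Real.log n := by
  refine ⟨1/1048576, 54, by norm_num, by norm_num, fun n hn => ⟨?_, upper_bound n hn⟩⟩
  have hlogn0 : 0 ≤ Real.log n := Real.log_nonneg (by exact_mod_cast (by omega : 1 ≤ n))
  have hn2 : (0:ℝ) ≤ (n:ℝ)^2 := by positivity
  by_cases h : 256 ≤ n
  · refine le_trans ?_ (lower_big n h)
    have : (1/1048576 : ℝ) ≤ 1/2048 := by norm_num
    nlinarith
  · push_neg at h
    refine le_trans ?_ (one_le_S n hn)
    have hnle : (n:ℝ) ≤ 255 := by exact_mod_cast (by omega : n ≤ 255)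
    have hnn : (0:ℝ) ≤ (n:ℝ) := by positivity
    have hnpos : (0:ℝ) < (n:ℝ) := by exact_mod_cast (by omega : 0 < n)
    have hlog : Real.log n ≤ Real.log 256 :=
      Real.log_le_log hnpos (by exact_mod_cast (by omega : n ≤ 256))
    have hlog256 : Real.log 256 ≤ 5.6 := by
      rw [show (256:ℝ) = 2^8 by norm_num, Real.log_pow]
      push_cast
      nlinarith [Real.log_two_lt_d9]
    nlinarith [sq_nonneg ((n:ℝ))]
end

section
/- For any directed path π as above, there exist constants c, C > 0 such that c n (log n)² ≤ 𝟙_π^T A_n Diag(𝟙_π) A_n 𝟙_π ≤ C n (log n)² for all n ≥ 2. -/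
open Finset

lemma path_step (p : ℕ → ℤ) (h : ∀ i, |p (i + 1) - p i| = 1) :
    ∀ m i : ℕ, |p (i + m) - p i| ≤ m := by
  intro m
  induction m with
  | zero => simp
  | succ m ih =>
    intro i
    have h1 := abs_sub_le (p (i + m + 1)) (p (i + m)) (p i)
    have h2 := h (i + m)
    have h3 := ih i
    have : |p (i + (m + 1)) - p i| ≤ 1 + m := by
      rw [show i + (m + 1) = i + m + 1 by ring]
      calc |p (i + m + 1) - p i| ≤ |p (i+m+1) - p (i+m)| + |p (i+m) - p i| := h1
        _ ≤ 1 + m := by rw [h2]; linarith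
    push_cast
    linarith

lemma path_lip (p : ℕ → ℤ) (h : ∀ i, |p (i + 1) - p i| = 1) (i k : ℕ) :
    |p i - p k| ≤ |(i : ℤ) - k| := by
  rcases le_total k i with hki | hik
  · obtain ⟨m, rfl⟩ := Nat.exists_eq_add_of_le hki
    calc |p (k + m) - p k| ≤ m := path_step p h m k
      _ = |((k + m : ℕ) : ℤ) - k| := by
          push_cast; rw [abs_of_nonneg]; ring; linarith [Int.ofNat_nonneg m]
  · obtain ⟨m, rfl⟩ := Nat.exists_eq_add_of_le hik
    rw [abs_sub_comm]
    calc |p (i + m) - p i| ≤ m := path_step p h m i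
      _ = |((i : ℤ)) - (i + m : ℕ)| := by
          push_cast; rw [abs_sub_comm, abs_of_nonneg]; ring; linarith [Int.ofNat_nonneg m]

lemma entry_eq (p : ℕ → ℤ) (h : ∀ i, |p (i + 1) - p i| = 1) (i k : ℕ) :
    triEntry ((i : ℤ), p i) ((k : ℤ), p k) = |(i : ℝ) - k|⁻¹ := by
  unfold triEntry
  by_cases hik : (i : ℤ) = (k : ℤ)
  · have : (i : ℝ) = k := by exact_mod_cast hik
    simp [hik, this]
  · rw [if_pos ⟨hik, path_lip p h i k⟩]
    push_cast
    ring_nf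

lemma log_step_le (d : ℕ) : Real.log ((d:ℝ) + 2) - Real.log ((d:ℝ) + 1) ≤ 1 / ((d:ℝ) + 1) := by
  have h := Real.log_le_sub_one_of_pos (show (0:ℝ) < ((d:ℝ)+2)/((d:ℝ)+1) by positivity)
  rw [Real.log_div (by positivity) (by positivity)] at h
  have e : ((d:ℝ)+2)/((d:ℝ)+1) - 1 = 1/((d:ℝ)+1) := by field_simp; norm_num
  linarith

lemma le_log_step (d : ℕ) : 1 / ((d:ℝ) + 2) ≤ Real.log ((d:ℝ) + 2) - Real.log ((d:ℝ) + 1) := by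
  have h := Real.log_le_sub_one_of_pos (show (0:ℝ) < ((d:ℝ)+1)/((d:ℝ)+2) by positivity)
  rw [Real.log_div (by positivity) (by positivity)] at h
  have e : ((d:ℝ)+1)/((d:ℝ)+2) - 1 = -(1/((d:ℝ)+2)) := by field_simp; ring
  linarith

lemma tele_log (m : ℕ) : ∑ d ∈ range m, (Real.log ((d:ℝ) + 2) - Real.log ((d:ℝ) + 1)) =
    Real.log ((m:ℝ) + 1) := by
  have h := Finset.sum_range_sub (fun j : ℕ => Real.log ((j:ℝ) + 1)) m
  simp only [Nat.cast_succ] at h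
  rw [show ∑ d ∈ range m, (Real.log ((d:ℝ) + 2) - Real.log ((d:ℝ) + 1)) =
    ∑ d ∈ range m, (Real.log ((d:ℝ) + 1 + 1) - Real.log ((d:ℝ) + 1)) by
      apply Finset.sum_congr rfl; intro d _; ring_nf]
  rw [h]; simp

lemma harm_lb (m : ℕ) : Real.log ((m:ℝ) + 1) ≤ ∑ d ∈ range m, (1:ℝ) / (d + 1) := by
  rw [← tele_log m]
  exact Finset.sum_le_sum fun d _ => log_step_le d

lemma harm_ub (m : ℕ) : ∑ d ∈ range m, (1:ℝ) / (d + 1) ≤ 1 + Real.log m := by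
  cases m with
  | zero => simp
  | succ t =>
    rw [Finset.sum_range_succ']
    have h1 : ∑ d ∈ range t, (1:ℝ)/(((d+1:ℕ):ℝ) + 1) ≤ Real.log ((t:ℝ)+1) := by
      rw [← tele_log t]
      apply Finset.sum_le_sum
      intro d _
      have h2 := le_log_step d
      push_cast
      rw [show ((d:ℝ)+1+1) = (d:ℝ)+2 by ring]
      exact h2
    push_cast
    push_cast at h1
    linarith

lemma Hk_eq (n k : ℕ) (hk : k < n) :
    ∑ i ∈ range n, |(i:ℝ) - k|⁻¹ =
      (∑ d ∈ range k, (1:ℝ)/(d+1)) + ∑ d ∈ range (n - (k+1)), (1:ℝ)/(d+1) := by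
  have hsplit := Finset.sum_Ico_consecutive (fun i : ℕ => |(i:ℝ) - k|⁻¹)
    (Nat.zero_le (k+1)) (Nat.succ_le_of_lt hk)
  rw [← Finset.range_eq_Ico, ← Finset.range_eq_Ico] at hsplit
  have e1 : ∑ i ∈ range (k+1), |(i:ℝ) - k|⁻¹ = ∑ d ∈ range k, (1:ℝ)/(d+1) := by
    rw [Finset.sum_range_succ]
    have hz : |(k:ℝ) - k|⁻¹ = 0 := by simp
    rw [hz, add_zero]
    rw [← Finset.sum_range_reflect (fun i : ℕ => |(i:ℝ) - k|⁻¹) k]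
    apply Finset.sum_congr rfl
    intro j hj
    have hjk : j < k := Finset.mem_range.mp hj
    have h1 : ((k - 1 - j : ℕ) : ℝ) = (k:ℝ) - 1 - j := by
      push_cast [Nat.cast_sub (by omega : 1 ≤ k), Nat.cast_sub (by omega : j ≤ k - 1)]
      ring
    rw [h1, show (k:ℝ) - 1 - j - k = -((j:ℝ)+1) by ring, abs_neg,
      abs_of_nonneg (by positivity), one_div]
  have e2 : ∑ i ∈ Finset.Ico (k+1) n, |(i:ℝ) - k|⁻¹ = ∑ d ∈ range (n - (k+1)), (1:ℝ)/(d+1) := by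
    rw [Finset.sum_Ico_eq_sum_range]
    apply Finset.sum_congr rfl
    intro j _
    push_cast
    rw [show (k:ℝ) + 1 + j - k = (j:ℝ) + 1 by ring, abs_of_nonneg (by positivity), one_div]
  rw [← hsplit, e1, e2]

lemma S_mono {a b : ℕ} (h : a ≤ b) :
    ∑ d ∈ range a, (1:ℝ)/(d+1) ≤ ∑ d ∈ range b, (1:ℝ)/(d+1) :=
  Finset.sum_le_sum_of_subset_of_nonneg (Finset.range_subset_range.mpr h)
    (fun i _ _ => by positivity)

lemma Hk_ub (n k : ℕ) (hk : k < n) (hn : 2 ≤ n) :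
    ∑ i ∈ range n, |(i:ℝ) - k|⁻¹ ≤ 5 * Real.log n := by
  rw [Hk_eq n k hk]
  have hS : ∀ m : ℕ, m ≤ n - 1 → ∑ d ∈ range m, (1:ℝ)/(d+1) ≤ 1 + Real.log n := by
    intro m hm
    calc ∑ d ∈ range m, (1:ℝ)/(d+1) ≤ ∑ d ∈ range (n-1), (1:ℝ)/(d+1) := S_mono hm
      _ ≤ 1 + Real.log ((n-1:ℕ):ℝ) := harm_ub (n-1)
      _ ≤ 1 + Real.log n := by
          have h1 : (0:ℝ) < ((n-1:ℕ):ℝ) := by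
            exact_mod_cast Nat.sub_pos_of_lt (by omega : 1 < n)
          have h2 : ((n-1:ℕ):ℝ) ≤ n := by exact_mod_cast Nat.sub_le n 1
          linarith [Real.log_le_log h1 h2]
  have ha := hS k (by omega)
  have hb := hS (n - (k+1)) (by omega)
  have hlog2 : (2:ℝ)/3 ≤ Real.log n := by
    have := Real.log_two_gt_d9
    have h2n : Real.log 2 ≤ Real.log n := by
      apply Real.log_le_log (by norm_num)
      exact_mod_cast hn
    linarith
  linarith

lemma Hk_lb (n k : ℕ) (hk : k < n) (hn : 2 ≤ n) :
    (1/2) * Real.log n ≤ ∑ i ∈ range n, |(i:ℝ) - k|⁻¹ := by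
  rw [Hk_eq n k hk]
  set m := max k (n - (k+1)) with hm
  have hSm : ∑ d ∈ range m, (1:ℝ)/(d+1) ≤
      (∑ d ∈ range k, (1:ℝ)/(d+1)) + ∑ d ∈ range (n - (k+1)), (1:ℝ)/(d+1) := by
    rcases max_cases k (n - (k+1)) with ⟨he, _⟩ | ⟨he, _⟩ <;> rw [hm, he]
    · have : (0:ℝ) ≤ ∑ d ∈ range (n - (k+1)), (1:ℝ)/(d+1) := by positivity
      linarith
    · have : (0:ℝ) ≤ ∑ d ∈ range k, (1:ℝ)/(d+1) := by positivity
      linarith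
  have hlog : (1/2) * Real.log n ≤ Real.log ((m:ℝ) + 1) := by
    have hsq : (n:ℝ) ≤ ((m:ℝ) + 1)^2 := by
      have h1 : n - 1 ≤ 2 * m := by omega
      have h2 : (n:ℝ) + 1 ≤ 2 * ((m:ℝ) + 1) := by
        have h3 : ((n - 1 : ℕ):ℝ) ≤ ((2*m : ℕ):ℝ) := by exact_mod_cast h1
        push_cast [Nat.cast_sub (by omega : 1 ≤ n)] at h3
        linarith
      nlinarith [sq_nonneg ((n:ℝ) - 1)]
    have := Real.log_le_log (by positivity : (0:ℝ) < n) hsq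
    rw [show ((m:ℝ)+1)^2 = ((m:ℝ)+1)^(2:ℕ) by norm_num, Real.log_pow] at this
    push_cast at this
    linarith
  calc (1/2) * Real.log n ≤ Real.log ((m:ℝ) + 1) := hlog
    _ ≤ ∑ d ∈ range m, (1:ℝ)/(d+1) := harm_lb m
    _ ≤ _ := hSm

/-- For any directed path `π_i = (i, p i)` with `p 0 = 0` and unit vertical
steps, there are constants `c, C > 0` such that for all `n ≥ 2`,
`c n (log n)² ≤ 𝟙_π^T A_n Diag(𝟙_π) A_n 𝟙_π ≤ C n (log n)²`, where the middle
factor restricts the intermediate vertex to lie on the path. -/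
theorem path_diag_quadratic_form_asymp :
    ∃ c C : ℝ, 0 < c ∧ 0 < C ∧ ∀ n : ℕ, 2 ≤ n → ∀ p : ℕ → ℤ, p 0 = 0 →
      (∀ i : ℕ, |p (i + 1) - p i| = 1) →
      c * n * (Real.log n) ^ 2 ≤
        (∑ i ∈ Finset.range n, ∑ j ∈ Finset.range n, ∑ k ∈ Finset.range n,
          triEntry ((i : ℤ), p i) ((k : ℤ), p k) *
            triEntry ((k : ℤ), p k) ((j : ℤ), p j)) ∧
      (∑ i ∈ Finset.range n, ∑ j ∈ Finset.range n, ∑ k ∈ Finset.range n,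
          triEntry ((i : ℤ), p i) ((k : ℤ), p k) *
            triEntry ((k : ℤ), p k) ((j : ℤ), p j)) ≤
        C * n * (Real.log n) ^ 2 := by
  refine ⟨1/4, 25, by norm_num, by norm_num, fun n hn p hp0 hps => ?_⟩
  have key : (∑ i ∈ Finset.range n, ∑ j ∈ Finset.range n, ∑ k ∈ Finset.range n,
      triEntry ((i : ℤ), p i) ((k : ℤ), p k) *
        triEntry ((k : ℤ), p k) ((j : ℤ), p j)) =
      ∑ k ∈ range n, (∑ i ∈ range n, |(i:ℝ) - k|⁻¹)^2 := by
    simp only [entry_eq p hps]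
    have step1 : (∑ i ∈ range n, ∑ j ∈ range n, ∑ k ∈ range n, |(i:ℝ)-k|⁻¹ * |(k:ℝ)-j|⁻¹)
        = ∑ i ∈ range n, ∑ k ∈ range n, ∑ j ∈ range n, |(i:ℝ)-k|⁻¹ * |(k:ℝ)-j|⁻¹ :=
      Finset.sum_congr rfl (fun i _ => Finset.sum_comm)
    have step2 : (∑ i ∈ range n, ∑ k ∈ range n, ∑ j ∈ range n, |(i:ℝ)-k|⁻¹ * |(k:ℝ)-j|⁻¹)
        = ∑ k ∈ range n, ∑ i ∈ range n, ∑ j ∈ range n, |(i:ℝ)-k|⁻¹ * |(k:ℝ)-j|⁻¹ :=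
      Finset.sum_comm
    rw [step1, step2]
    apply Finset.sum_congr rfl
    intro k _
    rw [← Finset.sum_mul_sum]
    rw [show (∑ j ∈ range n, |(k:ℝ)-j|⁻¹) = ∑ i ∈ range n, |(i:ℝ)-k|⁻¹ by
      apply Finset.sum_congr rfl; intro j _; rw [abs_sub_comm]]
    ring
  rw [key]
  constructor
  · have hconst : (1/4 : ℝ) * n * (Real.log n)^2 = ∑ _k ∈ range n, ((1/2) * Real.log n)^2 := by
      rw [Finset.sum_const, Finset.card_range, nsmul_eq_mul]; ring
    rw [hconst]
    apply Finset.sum_le_sum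
    intro k hk
    have hlogn : (0:ℝ) ≤ Real.log n :=
      Real.log_nonneg (by exact_mod_cast Nat.one_le_of_lt hn)
    exact pow_le_pow_left₀ (by linarith) (Hk_lb n k (Finset.mem_range.mp hk) hn) 2
  · have hconst : (25 : ℝ) * n * (Real.log n)^2 = ∑ _k ∈ range n, (5 * Real.log n)^2 := by
      rw [Finset.sum_const, Finset.card_range, nsmul_eq_mul]; ring
    rw [hconst]
    apply Finset.sum_le_sum
    intro k hk
    exact pow_le_pow_left₀ (by positivity) (Hk_ub n k (Finset.mem_range.mp hk) hn) 2
end
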